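/- Let γ be a probability vector on {1,...,K} with all γ_k > 0, let η > 0, and for o ∈ ℝ^K with all o_k > 0 define π_k(o) = γ_k o_k^{−η} / Σ_ℓ γ_ℓ o_ℓ^{−η}. With E_γ[f(O)] := Σ_k γ_k f(o_k), the inequality 1 − E_γ[O] − E_γ[O^{1−η}]/E_γ[O^{−η}] + E_γ[O²] ≥ E_γ[(1−O)²] holds; consequently, for U(o) = (1/2)Σ_k γ_k (1 − o_k)², the vector field o'_k = π_k(o)/γ_k − o_k satisfies ⟨∇U(o), o'⟩ ≤ −2U(o), so 𝟙 is a globally asymptotically stable equilibrium. -/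

import Mathlib

open Finset

theorem visit_control_tilt_lyapunov (K : ℕ) (hK : 1 ≤ K)
    (γ : Fin K → ℝ) (hγsum : ∑ k, γ k = 1) (hγ : ∀ k, 0 < γ k)
    (η : ℝ) (hη : 0 < η)
    (o : Fin K → ℝ) (ho : ∀ k, 0 < o k) :
    (1 - (∑ k, γ k * o k) -
        (∑ k, γ k * o k ^ (1 - η)) / (∑ k, γ k * o k ^ (-η)) +
        (∑ k, γ k * o k ^ (2 : ℕ)) ≥ ∑ k, γ k * (1 - o k) ^ 2) ∧
    (∑ k, (-(γ k * (1 - o k))) *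
        ((γ k * o k ^ (-η) / ∑ l, γ l * o l ^ (-η)) / γ k - o k) ≤
      -2 * ((1 / 2) * ∑ k, γ k * (1 - o k) ^ 2)) := by
  haveI : Nonempty (Fin K) := Fin.pos_iff_nonempty.mp hK
  set A := ∑ k, γ k * o k with hA
  set B := ∑ k, γ k * o k ^ (-η) with hB
  set C := ∑ k, γ k * o k ^ (1 - η) with hC
  have hBpos : 0 < B := Finset.sum_pos (fun k _ => mul_pos (hγ k) (Real.rpow_pos_of_pos (ho k) _)) Finset.univ_nonempty
  have h1 : ∀ k, o k ^ ((1:ℝ) - η) = o k * o k ^ (-η) := fun k => by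
    rw [sub_eq_add_neg, Real.rpow_add (ho k), Real.rpow_one]
  -- key: C ≤ A * B
  have hnn : (0:ℝ) ≤ ∑ j, ∑ k, γ j * γ k * ((o j - o k) * (o k ^ (-η) - o j ^ (-η))) := by
    refine Finset.sum_nonneg fun j _ => Finset.sum_nonneg fun k _ => mul_nonneg (mul_nonneg (hγ j).le (hγ k).le) ?_
    rcases le_total (o j) (o k) with h | h
    · have := Real.rpow_le_rpow_of_nonpos (ho j) h (neg_nonpos.mpr hη.le)
      nlinarith
    · exact mul_nonneg (by linarith)
        (by have := Real.rpow_le_rpow_of_nonpos (ho k) h (neg_nonpos.mpr hη.le); linarith)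
  have expand : ∑ j, ∑ k, γ j * γ k * ((o j - o k) * (o k ^ (-η) - o j ^ (-η)))
      = 2 * (A * B) - 2 * C := by
    have : ∀ j k, γ j * γ k * ((o j - o k) * (o k ^ (-η) - o j ^ (-η)))
        = (γ j * o j) * (γ k * o k ^ (-η)) + (γ k * o k) * (γ j * o j ^ (-η))
          - γ k * (γ j * (o j ^ ((1:ℝ) - η))) - γ j * (γ k * (o k ^ ((1:ℝ) - η))) := by
      intro j k; rw [h1 j, h1 k]; ring
    simp_rw [this, Finset.sum_sub_distrib, Finset.sum_add_distrib, ← Finset.mul_sum,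
      ← Finset.sum_mul, hγsum]
    simp_rw [one_mul]
    rw [← Finset.mul_sum]
    ring
  have key : C ≤ A * B := by nlinarith
  have keydiv : C / B ≤ A := (div_le_iff₀ hBpos).mpr key
  have hsq : ∑ k, γ k * (1 - o k) ^ 2 = 1 - 2 * A + ∑ k, γ k * o k ^ (2:ℕ) := by
    have : ∀ k, γ k * (1 - o k) ^ 2 = γ k - 2 * (γ k * o k) + γ k * o k ^ (2:ℕ) := by
      intro k; ring
    simp_rw [this, Finset.sum_add_distrib, Finset.sum_sub_distrib, ← Finset.mul_sum, hγsum]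
    rw [hA]
  constructor
  · rw [hsq]; linarith
  · have hlhs : ∑ k, (-(γ k * (1 - o k))) *
        ((γ k * o k ^ (-η) / ∑ l, γ l * o l ^ (-η)) / γ k - o k)
        = -(B - C) / B + (A - ∑ k, γ k * o k ^ (2:ℕ)) := by
      have : ∀ k, (-(γ k * (1 - o k))) * ((γ k * o k ^ (-η) / B) / γ k - o k)
          = -((γ k * o k ^ (-η) - γ k * (o k ^ ((1:ℝ)-η))) / B) + (γ k * o k - γ k * o k ^ (2:ℕ)) := by
        intro k
        have hk := (hγ k).ne'
        have hb := hBpos.ne'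
        rw [h1 k]
        field_simp
        ring
      rw [← hB]
      simp_rw [this]
      rw [Finset.sum_add_distrib, Finset.sum_neg_distrib, ← Finset.sum_div,
        Finset.sum_sub_distrib, Finset.sum_sub_distrib]
      rw [neg_div]
    rw [hlhs, hsq]
    have : -(B - C)/B = -1 + C/B := by field_simp; ring
    rw [this]; linarith
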